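/- The interval semantics simulates the atomic semantics: Let N be an RPN and, for any marking M of N, let M' := {p^c : p ∈ M} ∪ {p^r : p ∈ M} denote the corresponding complete marking of split(N). Then for all markings M₁, M₂ of N and every transition t of N with M₁ →_t M₂ in N: in split(N), the transition t⁻ is enabled in M'₁, firing t⁻ from M'₁ leads to a marking in which t⁺ is enabled, and firing t⁺ from that marking leads to M'₂. -/
import Mathlib


/-- A Read Petri net with places `P` and transitions `T`: nonempty presets,
contexts disjoint from presets, and an initial marking. Markings are sets of places. -/
structure RPN (P T : Type) where
  pre : T → Set P
  cont : T → Set P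
  post : T → Set P
  M0 : Set P
  pre_nonempty : ∀ t, (pre t).Nonempty
  cont_disjoint : ∀ t, Disjoint (cont t) (pre t)

variable {P T : Type}

/-- A transition is enabled in `M` when its preset and context are marked. -/
def enabled (N : RPN P T) (t : T) (M : Set P) : Prop :=
  N.pre t ∪ N.cont t ⊆ M

/-- The marking resulting from firing `t` in `M`. -/
def fireRes (N : RPN P T) (t : T) (M : Set P) : Set P :=
  (M \ N.pre t) ∪ N.post t

/-- `M →_t M'`: firing the enabled transition `t` from `M` leads to `M'`. -/
def fire (N : RPN P T) (t : T) (M M' : Set P) : Prop :=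
  enabled N t M ∧ M' = fireRes N t M

/-- A list of transitions fires sequentially from `M`. -/
def seqEnabled (N : RPN P T) : Set P → List T → Prop
  | _, [] => True
  | M, t :: l => enabled N t M ∧ seqEnabled N (fireRes N t M) l

/-- A list of transitions fires sequentially from `M` and reaches `M'` (an a-run). -/
def fireList (N : RPN P T) : Set P → List T → Set P → Prop
  | M, [], M' => M' = M
  | M, t :: l, M' => enabled N t M ∧ fireList N (fireRes N t M) l M'

/-- The set `S` is a-enabled in `M`: its elements can be ordered so that they
fire sequentially from `M`. -/
def aEnabled (N : RPN P T) (S : Set T) (M : Set P) : Prop :=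
  ∃ l : List T, l.Nodup ∧ (∀ t, t ∈ l ↔ t ∈ S) ∧ seqEnabled N M l

/-- The step `S` fires from `M` leading to `M'`. -/
def stepFires (N : RPN P T) (S : Set T) (M M' : Set P) : Prop :=
  (∀ t ∈ S, enabled N t M) ∧
  (S.Pairwise fun t t' => Disjoint (N.pre t) (N.pre t')) ∧
  M' = (M \ ⋃ t ∈ S, N.pre t) ∪ ⋃ t ∈ S, N.post t

/-- `t ⤳ t'`: `t` preempts `t'`. -/
def preempt (N : RPN P T) (t t' : T) : Prop :=
  (N.pre t ∩ N.cont t').Nonempty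

/-- `S` is a preemption cycle: its elements can be enumerated as
`t_1 ⤳ t_2 ⤳ … ⤳ t_n ⤳ t_1`. -/
def isPreemptionCycle (N : RPN P T) (S : Set T) : Prop :=
  ∃ (l : List T) (h : l ≠ []), l.Nodup ∧ (∀ t, t ∈ l ↔ t ∈ S) ∧
    l.Chain' (preempt N) ∧ preempt N (l.getLast h) (l.head h)
/-- The split net `split(N)`: places `p^c = inl (p, false)`, `p^r = inl (p, true)`,
`p_t = inr t`; transitions `t⁻ = (t, false)` and `t⁺ = (t, true)`. -/
def split (N : RPN P T) : RPN ((P × Bool) ⊕ T) (T × Bool) where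
  pre := fun s => match s with
    | (t, false) => (fun p => Sum.inl (p, false)) '' N.pre t
    | (t, true) => (fun p => Sum.inl (p, true)) '' N.pre t ∪ {Sum.inr t}
  cont := fun s => match s with
    | (t, false) => (fun p => Sum.inl (p, true)) '' N.cont t
    | (_, true) => ∅
  post := fun s => match s with
    | (t, false) => {Sum.inr t}
    | (t, true) => (fun p => Sum.inl (p, false)) '' N.post t ∪
        (fun p => Sum.inl (p, true)) '' N.post t
  M0 := (fun p => Sum.inl (p, false)) '' N.M0 ∪ (fun p => Sum.inl (p, true)) '' N.M0
  pre_nonempty := by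
    rintro ⟨t, b⟩
    cases b
    · exact (N.pre_nonempty t).image _
    · exact ⟨Sum.inr t, Or.inr rfl⟩
  cont_disjoint := by
    rintro ⟨t, b⟩
    cases b
    · rw [Set.disjoint_left]
      rintro x ⟨p, _, rfl⟩ ⟨q, _, h⟩
      simp at h
    · simp

/-- The complete marking of `split(N)` corresponding to a marking `M` of `N`. -/
def embMark (M : Set P) : Set ((P × Bool) ⊕ T) :=
  (fun p => Sum.inl (p, false)) '' M ∪ (fun p => Sum.inl (p, true)) '' M

/-- the interval semantics simulates the atomic semantics. If `N` is
safe and `M₁ →_t M₂` in `N`, then in `split(N)`, `t⁻` is enabled in `M'₁`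
(the complete marking corresponding to `M₁`), firing `t⁻` leads to a marking in
which `t⁺` is enabled, and firing `t⁺` from that marking leads to `M'₂`. -/
theorem interval_simulates_atomic {P T : Type} [Finite P] [Finite T]
    (N : RPN P T)
    (hsafe : ∀ (t : T) (M : Set P), enabled N t M → Disjoint (M \ N.pre t) (N.post t))
    (t : T) (M₁ M₂ : Set P) (h : fire N t M₁ M₂) :
    enabled (split N) (t, false) (embMark M₁) ∧
    enabled (split N) (t, true) (fireRes (split N) (t, false) (embMark M₁)) ∧
    fireRes (split N) (t, true) (fireRes (split N) (t, false) (embMark M₁)) =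
      embMark M₂ := by
  obtain ⟨hen, hM2⟩ := h
  have hpre : N.pre t ⊆ M₁ := (Set.union_subset_iff.mp hen).1
  have hcont : N.cont t ⊆ M₁ := (Set.union_subset_iff.mp hen).2
  refine ⟨?_, ?_, ?_⟩
  · rintro x (⟨p, hp, rfl⟩ | ⟨p, hp, rfl⟩)
    · exact Or.inl ⟨p, hpre hp, rfl⟩
    · exact Or.inr ⟨p, hcont hp, rfl⟩
  · rintro x ((⟨p, hp, rfl⟩ | rfl) | h)
    · exact Or.inl ⟨Or.inr ⟨p, hpre hp, rfl⟩, by simp [split]⟩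
    · exact Or.inr rfl
    · exact absurd h (Set.notMem_empty x)
  · subst hM2
    ext x
    simp only [fireRes, split, embMark, Set.mem_union, Set.mem_diff, Set.mem_image,
      Set.mem_singleton_iff, Set.mem_setOf_eq]
    constructor
    · rintro (⟨(⟨(⟨p, hp, rfl⟩ | ⟨p, hp, rfl⟩), hnp⟩ | rfl), hnt⟩ | ⟨p, hp, rfl⟩ | ⟨p, hp, rfl⟩)
      · exact Or.inl ⟨p, Or.inl ⟨hp, fun hc => hnp ⟨p, hc, rfl⟩⟩, rfl⟩
      · refine Or.inr ⟨p, Or.inl ⟨hp, ?_⟩, rfl⟩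
        intro hc
        exact hnt (Or.inl ⟨p, hc, rfl⟩)
      · exact absurd (Or.inr rfl) hnt
      · exact Or.inl ⟨p, Or.inr hp, rfl⟩
      · exact Or.inr ⟨p, Or.inr hp, rfl⟩
    · rintro (⟨p, (⟨hp, hnp⟩ | hp), rfl⟩ | ⟨p, (⟨hp, hnp⟩ | hp), rfl⟩)
      · refine Or.inl ⟨Or.inl ⟨Or.inl ⟨p, hp, rfl⟩, ?_⟩, ?_⟩ <;> simp_all
      · exact Or.inr (Or.inl ⟨p, hp, rfl⟩)
      · refine Or.inl ⟨Or.inl ⟨Or.inr ⟨p, hp, rfl⟩, by simp⟩, ?_⟩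
        rintro (⟨q, hq, hqe⟩ | h) <;> simp_all
      · exact Or.inr (Or.inr ⟨p, hp, rfl⟩)
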